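/- Let A be a J-self-adjoint, J-non-negative, boundedly invertible operator in a Kreĭn space K, and let A_− be the induced self-adjoint operator in the dual Hilbert space K_−. Then for every f ∈ K_+ = dom(JA)^{1/2} one has ∫_ℝ λ d[E_K(λ)f, f] = {f,f}_+ = ‖(JA)^{1/2} f‖², where E_K is the eigenspectral function of A, which is the restriction to K of the spectral measure E of A_−. -/

import Mathlib

open MeasureTheory
open scoped InnerProductSpace

namespace EigAux

/-- formal simple function: finite sum of constants times indicators -/
noncomputable def sf (m : ℕ) (c : ℕ → ℝ) (s : ℕ → Set ℝ) : ℝ → ℝ :=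
  fun x => ∑ i ∈ Finset.range m, (s i).indicator (fun _ => c i) x

lemma sf_measurable (m : ℕ) (c : ℕ → ℝ) (s : ℕ → Set ℝ)
    (hs : ∀ i, MeasurableSet (s i)) : Measurable (sf m c s) := by
  apply Finset.measurable_sum
  intro i _
  exact (measurable_const).indicator (hs i)

lemma sf_integrable (m : ℕ) (c : ℕ → ℝ) (s : ℕ → Set ℝ)
    (hs : ∀ i, MeasurableSet (s i)) (μ : Measure ℝ) [IsFiniteMeasure μ] :
    Integrable (sf m c s) μ := by
  apply integrable_finset_sum
  intro i _
  exact (integrable_const (c i)).indicator (hs i)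

lemma sf_integral (m : ℕ) (c : ℕ → ℝ) (s : ℕ → Set ℝ)
    (hs : ∀ i, MeasurableSet (s i)) (μ : Measure ℝ) [IsFiniteMeasure μ] :
    ∫ x, sf m c s x ∂μ = ∑ i ∈ Finset.range m, c i * (μ (s i)).toReal := by
  unfold sf
  rw [integral_finset_sum]
  · refine Finset.sum_congr rfl fun i _ => ?_
    rw [integral_indicator_const _ (hs i)]
    simp [mul_comm, Measure.real]
  · intro i _
    exact (integrable_const (c i)).indicator (hs i)

lemma sf_mul (m m' : ℕ) (c c' : ℕ → ℝ) (s s' : ℕ → Set ℝ) (x : ℝ) :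
    sf m c s x * sf m' c' s' x
      = ∑ i ∈ Finset.range m, ∑ j ∈ Finset.range m',
          (s i ∩ s' j).indicator (fun _ => c i * c' j) x := by
  unfold sf
  rw [Finset.sum_mul_sum]
  refine Finset.sum_congr rfl fun i _ => Finset.sum_congr rfl fun j _ => ?_
  by_cases hi : x ∈ s i <;> by_cases hj : x ∈ s' j <;>
    simp [Set.indicator_apply, hi, hj, Set.mem_inter_iff]

lemma sf_mul_integral (m m' : ℕ) (c c' : ℕ → ℝ) (s s' : ℕ → Set ℝ)
    (hs : ∀ i, MeasurableSet (s i)) (hs' : ∀ i, MeasurableSet (s' i))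
    (μ : Measure ℝ) [IsFiniteMeasure μ] :
    ∫ x, sf m c s x * sf m' c' s' x ∂μ
      = ∑ i ∈ Finset.range m, ∑ j ∈ Finset.range m',
          c i * c' j * (μ (s i ∩ s' j)).toReal := by
  have : ∀ x, sf m c s x * sf m' c' s' x
      = ∑ i ∈ Finset.range m, ∑ j ∈ Finset.range m',
          (s i ∩ s' j).indicator (fun _ => c i * c' j) x := sf_mul m m' c c' s s'
  rw [integral_congr_ae (Filter.Eventually.of_forall this)]
  rw [integral_finset_sum]
  · refine Finset.sum_congr rfl fun i _ => ?_
    rw [integral_finset_sum]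
    · refine Finset.sum_congr rfl fun j _ => ?_
      rw [integral_indicator_const _ ((hs i).inter (hs' j))]
      simp [mul_comm, Measure.real]
    · intro j _
      exact (integrable_const _).indicator ((hs i).inter (hs' j))
  · intro i _
    apply integrable_finset_sum
    intro j _
    exact (integrable_const _).indicator ((hs i).inter (hs' j))



variable {Km : Type*} [NormedAddCommGroup Km] [InnerProductSpace ℂ Km]

/-- the operator `∑ c i • E (s i)` -/
noncomputable def Wop (E : Set ℝ → Km →L[ℂ] Km) (m : ℕ) (c : ℕ → ℝ) (s : ℕ → Set ℝ) :
    Km →L[ℂ] Km :=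
  ∑ i ∈ Finset.range m, (c i : ℂ) • E (s i)

lemma Wop_inner_left (E : Set ℝ → Km →L[ℂ] Km) (m : ℕ) (c : ℕ → ℝ) (s : ℕ → Set ℝ)
    (u v : Km) :
    (⟪Wop E m c s u, v⟫_ℂ).re = ∑ i ∈ Finset.range m, c i * (⟪E (s i) u, v⟫_ℂ).re := by
  unfold Wop
  rw [ContinuousLinearMap.sum_apply, sum_inner, Complex.re_sum]
  refine Finset.sum_congr rfl fun i _ => ?_
  rw [ContinuousLinearMap.smul_apply, inner_smul_left]
  simp [Complex.conj_ofReal, Complex.re_ofReal_mul]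

lemma Wop_inner_right (E : Set ℝ → Km →L[ℂ] Km) (m : ℕ) (c : ℕ → ℝ) (s : ℕ → Set ℝ)
    (u v : Km) :
    (⟪u, Wop E m c s v⟫_ℂ).re = ∑ i ∈ Finset.range m, c i * (⟪u, E (s i) v⟫_ℂ).re := by
  unfold Wop
  rw [ContinuousLinearMap.sum_apply, inner_sum, Complex.re_sum]
  refine Finset.sum_congr rfl fun i _ => ?_
  rw [ContinuousLinearMap.smul_apply, inner_smul_right]
  simp [Complex.conj_ofReal, Complex.re_ofReal_mul]


open scoped InnerProductSpace


noncomputable def qn (n : ℕ) : ℝ := ((2:ℝ)^n)⁻¹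
def Nn (n : ℕ) : ℕ := n * 2^n
noncomputable def cseq (n i : ℕ) : ℝ := if i < Nn n then qn n else -qn n
noncomputable def Sseq (n i : ℕ) : Set ℝ :=
  if i < Nn n then Set.Ici (((i:ℝ)+1) * qn n) else Set.Iic (-((((i - Nn n):ℕ):ℝ)+1) * qn n)

lemma Sseq_meas (n i : ℕ) : MeasurableSet (Sseq n i) := by
  unfold Sseq; split
  · exact measurableSet_Ici
  · exact measurableSet_Iic

lemma qn_pos (n : ℕ) : 0 < qn n := by unfold qn; positivity

lemma countlem (N : ℕ) (y : ℝ) :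
    (∑ i ∈ Finset.range N, (if ((i:ℝ)+1) ≤ y then (1:ℝ) else 0))
      = ((min ⌊y⌋₊ N : ℕ) : ℝ) := by
  have hiff : ∀ i : ℕ, (((i:ℝ)+1) ≤ y) ↔ i < ⌊y⌋₊ := by
    intro i
    constructor
    · intro h
      have : ((i+1:ℕ):ℝ) ≤ y := by push_cast; linarith
      have := Nat.le_floor this
      omega
    · intro h
      have hy : (0:ℝ) ≤ y := by
        by_contra hy
        push_neg at hy
        have := Nat.floor_of_nonpos hy.le
        omega
      have h0 : (i+1) ≤ ⌊y⌋₊ := h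
      have h1 : ((i+1:ℕ):ℝ) ≤ (⌊y⌋₊ : ℝ) := Nat.cast_le.mpr h0
      have h2 := Nat.floor_le hy
      push_cast at h1 ⊢
      linarith
  simp_rw [hiff]
  rw [Finset.sum_boole]
  congr 1
  have : (Finset.range N).filter (fun i => i < ⌊y⌋₊) = Finset.range (min ⌊y⌋₊ N) := by
    ext a; simp; omega
  rw [this, Finset.card_range]

lemma phi_closed (n : ℕ) (x : ℝ) :
    sf (2 * Nn n) (cseq n) (Sseq n) x
      = qn n * (((min ⌊x * 2^n⌋₊ (Nn n) : ℕ):ℝ) - ((min ⌊(-x) * 2^n⌋₊ (Nn n) : ℕ):ℝ)) := by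
  have h2n : (0:ℝ) < 2^n := by positivity
  unfold sf
  rw [two_mul, Finset.sum_range_add]
  have hA : ∑ i ∈ Finset.range (Nn n), (Sseq n i).indicator (fun _ => cseq n i) x
      = qn n * ((min ⌊x * 2^n⌋₊ (Nn n) : ℕ):ℝ) := by
    rw [← countlem, Finset.mul_sum]
    refine Finset.sum_congr rfl fun i hi => ?_
    rw [Finset.mem_range] at hi
    simp only [cseq, Sseq, if_pos hi]
    have hcond : x ∈ Set.Ici (((i:ℝ)+1) * qn n) ↔ ((i:ℝ)+1) ≤ x * 2^n := by
      rw [Set.mem_Ici]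
      unfold qn
      rw [mul_inv_le_iff₀ h2n]
    by_cases h : ((i:ℝ)+1) ≤ x * 2^n
    · rw [Set.indicator_of_mem (hcond.mpr h), if_pos h, mul_one]
    · rw [Set.indicator_of_notMem (fun hc => h (hcond.mp hc)), if_neg h, mul_zero]
  have hB : ∑ i ∈ Finset.range (Nn n),
        (Sseq n (Nn n + i)).indicator (fun _ => cseq n (Nn n + i)) x
      = -(qn n * ((min ⌊(-x) * 2^n⌋₊ (Nn n) : ℕ):ℝ)) := by
    rw [← countlem, Finset.mul_sum, ← Finset.sum_neg_distrib]
    refine Finset.sum_congr rfl fun i hi => ?_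
    have hni : ¬ (Nn n + i < Nn n) := by omega
    simp only [cseq, Sseq, if_neg hni]
    have hsub : ((Nn n + i - Nn n : ℕ) : ℝ) = (i:ℝ) := by
      congr 1; omega
    rw [hsub]
    have hcond : x ∈ Set.Iic (-((i:ℝ)+1) * qn n) ↔ ((i:ℝ)+1) ≤ (-x) * 2^n := by
      rw [Set.mem_Iic,
        show (-((i:ℝ)+1) * qn n) = -(((i:ℝ)+1) * qn n) by ring, le_neg]
      unfold qn
      rw [mul_inv_le_iff₀ h2n]
    by_cases h : ((i:ℝ)+1) ≤ (-x) * 2^n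
    · rw [Set.indicator_of_mem ?_, if_pos h, mul_one]
      · exact hcond.mpr h
    · rw [Set.indicator_of_notMem (fun hc => h (hcond.mp hc)), if_neg h, mul_zero, neg_zero]
  rw [hA, hB]
  ring

noncomputable def phi (n : ℕ) : ℝ → ℝ := sf (2 * Nn n) (cseq n) (Sseq n)

lemma phi_measurable (n : ℕ) : Measurable (phi n) :=
  sf_measurable _ _ _ (Sseq_meas n)

lemma phi_bound (n : ℕ) (x : ℝ) : |phi n x| ≤ |x| := by
  have h2n : (0:ℝ) < 2^n := by positivity
  have hq := qn_pos n
  have hq1 : qn n * (2:ℝ)^n = 1 := inv_mul_cancel₀ (ne_of_gt h2n)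
  unfold phi
  rw [phi_closed]
  rcases le_total 0 x with hx | hx
  · have hz : ⌊(-x) * 2^n⌋₊ = 0 := Nat.floor_of_nonpos (by nlinarith)
    have h1 : ((min ⌊x * 2^n⌋₊ (Nn n) : ℕ):ℝ) ≤ x * 2^n :=
      le_trans (Nat.cast_le.mpr (min_le_left _ _)) (Nat.floor_le (by positivity))
    have h0 : (0:ℝ) ≤ ((min ⌊x * 2^n⌋₊ (Nn n) : ℕ):ℝ) := Nat.cast_nonneg _
    rw [hz, min_eq_left (Nat.zero_le _), Nat.cast_zero, sub_zero,
      abs_of_nonneg hx, abs_of_nonneg (by positivity)]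
    nlinarith [mul_le_mul_of_nonneg_left h1 hq.le]
  · have hz : ⌊x * 2^n⌋₊ = 0 := Nat.floor_of_nonpos (by nlinarith)
    have h1 : ((min ⌊(-x) * 2^n⌋₊ (Nn n) : ℕ):ℝ) ≤ (-x) * 2^n :=
      le_trans (Nat.cast_le.mpr (min_le_left _ _))
        (Nat.floor_le (mul_nonneg (by linarith) h2n.le))
    have h0 : (0:ℝ) ≤ ((min ⌊(-x) * 2^n⌋₊ (Nn n) : ℕ):ℝ) := Nat.cast_nonneg _
    rw [hz, min_eq_left (Nat.zero_le _), Nat.cast_zero, zero_sub,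
      abs_of_nonpos hx, abs_of_nonpos (by nlinarith)]
    nlinarith [mul_le_mul_of_nonneg_left h1 hq.le]

lemma phi_tendsto (x : ℝ) : Filter.Tendsto (fun n => phi n x) Filter.atTop (nhds x) := by
  have hq0 : Filter.Tendsto qn Filter.atTop (nhds 0) := by
    have hqe : qn = fun n => (2⁻¹:ℝ)^n := by funext n; rw [qn, inv_pow]
    rw [hqe]
    exact tendsto_pow_atTop_nhds_zero_of_lt_one (by norm_num) (by norm_num)
  rw [tendsto_iff_dist_tendsto_zero]
  apply squeeze_zero' (Filter.Eventually.of_forall fun n => dist_nonneg) ?_ hq0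
  filter_upwards [Filter.eventually_ge_atTop ⌈|x|⌉₊] with n hn
  have h2n : (0:ℝ) < 2^n := by positivity
  have hq := qn_pos n
  have hq1 : qn n * (2:ℝ)^n = 1 := inv_mul_cancel₀ (ne_of_gt h2n)
  have hxn : |x| ≤ (n:ℝ) := le_trans (Nat.le_ceil _) (Nat.cast_le.mpr hn)
  rw [Real.dist_eq]
  unfold phi; rw [phi_closed]
  rcases le_total 0 x with hx | hx
  · have hxn' : x ≤ (n:ℝ) := le_trans (le_abs_self x) hxn
    have hz : ⌊(-x) * 2^n⌋₊ = 0 := Nat.floor_of_nonpos (by nlinarith)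
    have hmin : min ⌊x * 2^n⌋₊ (Nn n) = ⌊x * 2^n⌋₊ := by
      apply min_eq_left
      have hcmp : ⌊x * 2^n⌋₊ ≤ ⌊((n * 2^n : ℕ):ℝ)⌋₊ := by
        apply Nat.floor_le_floor
        push_cast
        nlinarith
      rw [Nat.floor_natCast] at hcmp
      exact hcmp
    rw [hz, min_eq_left (Nat.zero_le _), Nat.cast_zero, sub_zero, hmin]
    have hfl := Nat.floor_le (show (0:ℝ) ≤ x * 2^n from mul_nonneg hx h2n.le)
    have hfu := Nat.lt_floor_add_one (x * 2^n)
    rw [abs_le]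
    constructor <;>
      nlinarith [mul_le_mul_of_nonneg_left hfl hq.le, mul_lt_mul_of_pos_left hfu hq]
  · have hxn' : -x ≤ (n:ℝ) := le_trans (neg_le_abs x) hxn
    have hz : ⌊x * 2^n⌋₊ = 0 := Nat.floor_of_nonpos (by nlinarith)
    have hmin : min ⌊(-x) * 2^n⌋₊ (Nn n) = ⌊(-x) * 2^n⌋₊ := by
      apply min_eq_left
      have hcmp : ⌊(-x) * 2^n⌋₊ ≤ ⌊((n * 2^n : ℕ):ℝ)⌋₊ := by
        apply Nat.floor_le_floor
        push_cast
        nlinarith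
      rw [Nat.floor_natCast] at hcmp
      exact hcmp
    rw [hz, min_eq_left (Nat.zero_le _), Nat.cast_zero, zero_sub, hmin]
    have hfl := Nat.floor_le (show (0:ℝ) ≤ (-x) * 2^n from mul_nonneg (by linarith) h2n.le)
    have hfu := Nat.lt_floor_add_one ((-x) * 2^n)
    rw [abs_le]
    constructor <;>
      nlinarith [mul_le_mul_of_nonneg_left hfl hq.le, mul_lt_mul_of_pos_left hfu hq]

lemma sf_mul_integrable (m m' : ℕ) (c c' : ℕ → ℝ) (s s' : ℕ → Set ℝ)
    (hs : ∀ i, MeasurableSet (s i)) (hs' : ∀ i, MeasurableSet (s' i))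
    (μ : Measure ℝ) [IsFiniteMeasure μ] :
    Integrable (fun x => sf m c s x * sf m' c' s' x) μ := by
  have heq : (fun x => sf m c s x * sf m' c' s' x)
      = fun x => ∑ i ∈ Finset.range m, ∑ j ∈ Finset.range m',
          (s i ∩ s' j).indicator (fun _ => c i * c' j) x := funext (sf_mul m m' c c' s s')
  rw [heq]
  apply integrable_finset_sum
  intro i _
  apply integrable_finset_sum
  intro j _
  exact (integrable_const _).indicator ((hs i).inter (hs' j))

lemma phi_mul_integrable (a b : ℕ) (μ : Measure ℝ) [IsFiniteMeasure μ] :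
    Integrable (fun x => phi a x * phi b x) μ :=
  sf_mul_integrable _ _ _ _ _ _ (Sseq_meas a) (Sseq_meas b) μ

lemma phi_integral_tendsto (μ : Measure ℝ) [IsFiniteMeasure μ]
    (hμ : Integrable (fun x : ℝ => x) μ) :
    Filter.Tendsto (fun n => ∫ x, phi n x ∂μ) Filter.atTop (nhds (∫ x, x ∂μ)) := by
  apply tendsto_integral_of_dominated_convergence (fun x => |x|)
    (fun n => (phi_measurable n).aestronglyMeasurable) hμ.abs
  · intro n
    exact Filter.Eventually.of_forall fun x => by
      rw [Real.norm_eq_abs]; exact phi_bound n x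
  · exact Filter.Eventually.of_forall fun x => phi_tendsto x

end EigAux


open EigAux in
/-- For a J-self-adjoint, J-non-negative, boundedly invertible operator `A` in a Kreĭn space
`K`, with induced self-adjoint operator `A₋` in the dual Hilbert space `K₋`, one has
`∫ λ d[E_K(λ)f, f] = {f,f}₊ = ‖(JA)^{1/2} f‖²` for every `f ∈ K₊ = dom(JA)^{1/2} = dom A₋`.

Everything is transported to the Hilbert space `K₋` (here `Km`): `A₋` (here `Am`) is a
self-adjoint operator whose domain is `K₊`, the `K₊`-inner product is
`{f,g}₊ = {A₋f, A₋g}₋` (so `{f,f}₊ = ‖A₋f‖² = ‖(JA)^{1/2}f‖²`), the Kreĭn pairing satisfies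
`[u, v] = {A₋u, v}₋` for `u ∈ K₊`, the eigenspectral function `E_K` of `A` is the restriction
to `K` of the spectral measure `E` of `A₋`; `E` is encoded by a projection-valued family
together with its diagonal measures `ν u` and the spectral representation of `A₋`, and the
signed measure `Δ ↦ [E_K(Δ)f, f] = {E(Δ)(A₋f), f}₋` by the difference `μp − μn`. -/
theorem eigenspectral_integral_eq_plus_norm
    {Km : Type*} [NormedAddCommGroup Km] [InnerProductSpace ℂ Km] [CompleteSpace Km]
    (Am : Km →ₗ.[ℂ] Km) (hAm : IsSelfAdjoint Am)
    (E : Set ℝ → Km →L[ℂ] Km)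
    (hEmul : ∀ s t : Set ℝ, MeasurableSet s → MeasurableSet t →
      (E s).comp (E t) = E (s ∩ t))
    (hEsa : ∀ (s : Set ℝ) (u v : Km), MeasurableSet s → ⟪E s u, v⟫_ℂ = ⟪u, E s v⟫_ℂ)
    (hEuniv : E Set.univ = ContinuousLinearMap.id ℂ Km)
    -- the diagonal measures `ν u (Δ) = {E(Δ)u, u}₋ = ‖E(Δ)u‖²` of the spectral measure
    (ν : Km → Measure ℝ)
    (hν : ∀ (u : Km) (s : Set ℝ), MeasurableSet s → (ν u s).toReal = (⟪E s u, u⟫_ℂ).re)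
    -- spectral theorem for the self-adjoint operator `A₋`
    (hspec₁ : ∀ u : Am.domain, Integrable (fun x : ℝ => x) (ν u) ∧
      (⟪Am u, (u : Km)⟫_ℂ).re = ∫ x : ℝ, x ∂(ν (u : Km)))
    (hspec₂ : ∀ u : Am.domain, Integrable (fun x : ℝ => x ^ 2) (ν u) ∧
      ‖Am u‖ ^ 2 = ∫ x : ℝ, x ^ 2 ∂(ν (u : Km)))
    -- the fixed element `f ∈ K₊`
    (f : Am.domain)
    -- `μp − μn` is the signed measure `Δ ↦ [E_K(Δ)f, f] = {E(Δ)(A₋f), f}₋`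
    (μp μn : Measure ℝ) [IsFiniteMeasure μp] [IsFiniteMeasure μn]
    (hμ : ∀ s : Set ℝ, MeasurableSet s →
      (μp s).toReal - (μn s).toReal = (⟪E s (Am f), (f : Km)⟫_ℂ).re)
    (hμp : Integrable (fun x : ℝ => x) μp) (hμn : Integrable (fun x : ℝ => x) μn) :
    (∫ x : ℝ, x ∂μp) - (∫ x : ℝ, x ∂μn) = ‖Am f‖ ^ 2 := by
  classical
  by_cases hf0 : (f : Km) = 0
  · -- trivial case f = 0
    have hf : f = 0 := Subtype.ext (by simpa using hf0)
    have hAmf : Am f = 0 := by rw [hf]; exact Am.map_zero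
    have hμeq : μp = μn := by
      ext s hs
      have h := hμ s hs
      rw [hf0, inner_zero_right] at h
      simp only [Complex.zero_re] at h
      exact (ENNReal.toReal_eq_toReal_iff' (measure_ne_top μp s) (measure_ne_top μn s)).mp
        (by linarith)
    rw [hμeq, sub_self, hAmf, norm_zero]
    norm_num
  -- main case
  have hdense := hAm.dense_domain
  have hsym : ∀ u v : Am.domain, ⟪Am u, (v : Km)⟫_ℂ = ⟪(u : Km), Am v⟫_ℂ := by
    have hAm' : Am.adjoint = Am := hAm
    have h := Am.adjoint_isFormalAdjoint hdense
    rw [hAm'] at h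
    exact h
  have hre_swap : ∀ a b : Km, (⟪a, b⟫_ℂ).re = (⟪b, a⟫_ℂ).re := by
    intro a b
    rw [← inner_conj_symm a b, Complex.conj_re]
  have hfin : ∀ u : Km, u ≠ 0 → IsFiniteMeasure (ν u) := by
    intro u hu
    constructor
    by_contra h
    have htop : ν u Set.univ = ⊤ := by
      rcases eq_top_or_lt_top (ν u Set.univ) with h' | h'
      · exact h'
      · exact absurd h' h
    have h0 := hν u Set.univ MeasurableSet.univ
    rw [htop, hEuniv] at h0
    simp only [ContinuousLinearMap.id_apply, ENNReal.toReal_top] at h0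
    have hn : (⟪u, u⟫_ℂ).re = ‖u‖ ^ 2 := by
      have := @inner_self_eq_norm_sq ℂ _ _ _ _ u
      simpa using this
    rw [← h0] at hn
    have h2 : ‖u‖ = 0 := by nlinarith [norm_nonneg u]
    exact hu (norm_eq_zero.mp h2)
  haveI hνf : IsFiniteMeasure (ν (f : Km)) := hfin _ hf0
  -- polarization for a single set
  have hpol : ∀ (u w : Km) (s : Set ℝ), MeasurableSet s →
      (⟪E s u, w⟫_ℂ).re
        = ((ν (u + w) s).toReal - (ν u s).toReal - (ν w s).toReal) / 2 := by
    intro u w s hs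
    have h1 := hν (u + w) s hs
    have h2 := hν u s hs
    have h3 := hν w s hs
    have hswap : (⟪E s w, u⟫_ℂ).re = (⟪E s u, w⟫_ℂ).re := by
      rw [hEsa s w u hs]
      exact hre_swap w (E s u)
    have hexp : (⟪E s (u + w), u + w⟫_ℂ).re
        = (⟪E s u, u⟫_ℂ).re + (⟪E s u, w⟫_ℂ).re
          + (⟪E s w, u⟫_ℂ).re + (⟪E s w, w⟫_ℂ).re := by
      rw [map_add, inner_add_left, inner_add_right, inner_add_right]
      simp only [Complex.add_re]
      ring
    rw [hexp] at h1
    linarith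
  -- the approximating vectors
  set v : ℕ → Km := fun n => Wop E (2 * Nn n) (cseq n) (Sseq n) (f : Km) with hvdef
  have hx2 : Integrable (fun x : ℝ => x ^ 2) (ν (f : Km)) := (hspec₂ f).1
  -- cross inner products
  have hWW : ∀ k l : ℕ, (⟪v k, v l⟫_ℂ).re = ∫ x, phi k x * phi l x ∂(ν (f : Km)) := by
    intro k l
    simp only [hvdef]
    rw [Wop_inner_left]
    simp only [EigAux.phi]
    rw [sf_mul_integral _ _ _ _ _ _ (Sseq_meas k) (Sseq_meas l) (ν (f : Km))]
    refine Finset.sum_congr rfl fun i _ => ?_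
    rw [Wop_inner_right, Finset.mul_sum]
    refine Finset.sum_congr rfl fun j _ => ?_
    have hEE : (⟪E (Sseq k i) (f : Km), E (Sseq l j) (f : Km)⟫_ℂ).re
        = (ν (f : Km) (Sseq k i ∩ Sseq l j)).toReal := by
      rw [hEsa _ _ _ (Sseq_meas k i)]
      have hcomp : E (Sseq k i) (E (Sseq l j) (f : Km)) = E (Sseq k i ∩ Sseq l j) (f : Km) := by
        rw [← hEmul _ _ (Sseq_meas k i) (Sseq_meas l j)]
        rfl
      rw [hcomp, hre_swap, hν (f : Km) _ ((Sseq_meas k i).inter (Sseq_meas l j))]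
    rw [hEE]
    ring
  -- integrability facts
  have hint2 : ∀ a : ℕ, Integrable (fun x => (phi a x - x) ^ 2) (ν (f : Km)) := by
    intro a
    apply Integrable.mono' (hx2.const_mul 4)
      (((phi_measurable a).sub measurable_id).pow_const 2).aestronglyMeasurable
    refine Filter.Eventually.of_forall fun x => ?_
    rw [Real.norm_eq_abs, abs_of_nonneg (sq_nonneg _)]
    have habs : |phi a x - x| ≤ 2 * |x| := by
      calc |phi a x - x| ≤ |phi a x| + |x| := abs_sub _ _
        _ ≤ 2 * |x| := by linarith [phi_bound a x]
    calc (phi a x - x) ^ 2 = |phi a x - x| ^ 2 := (sq_abs _).symm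
      _ ≤ (2 * |x|) ^ 2 := pow_le_pow_left₀ (abs_nonneg _) habs 2
      _ = 4 * x ^ 2 := by rw [mul_pow, sq_abs]; norm_num
  have hsqint : ∀ a b : ℕ, Integrable (fun x => (phi a x - phi b x) ^ 2) (ν (f : Km)) := by
    intro a b
    have heq : (fun x => (phi a x - phi b x) ^ 2)
        = fun x => (phi a x * phi a x - 2 * (phi a x * phi b x)) + phi b x * phi b x := by
      funext x; ring
    rw [heq]
    exact ((phi_mul_integrable a a _).sub ((phi_mul_integrable a b _).const_mul 2)).add
      (phi_mul_integrable b b _)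
  have hvdiff : ∀ k l : ℕ, ‖v k - v l‖ ^ 2 = ∫ x, (phi k x - phi l x) ^ 2 ∂(ν (f : Km)) := by
    intro k l
    have hnk : ‖v k‖ ^ 2 = ∫ x, phi k x * phi k x ∂(ν (f : Km)) := by
      rw [← hWW k k]
      have := @inner_self_eq_norm_sq ℂ _ _ _ _ (v k)
      simpa using this.symm
    have hnl : ‖v l‖ ^ 2 = ∫ x, phi l x * phi l x ∂(ν (f : Km)) := by
      rw [← hWW l l]
      have := @inner_self_eq_norm_sq ℂ _ _ _ _ (v l)
      simpa using this.symm
    have i1 : Integrable (fun x => phi k x * phi k x - 2 * (phi k x * phi l x)) (ν (f : Km)) := by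
      exact (phi_mul_integrable k k _).sub ((phi_mul_integrable k l _).const_mul 2)
    have i2 : Integrable (fun x => 2 * (phi k x * phi l x)) (ν (f : Km)) := by
      exact (phi_mul_integrable k l _).const_mul 2
    have hrhs : ∫ x, (phi k x - phi l x) ^ 2 ∂(ν (f : Km))
        = (∫ x, phi k x * phi k x ∂(ν (f : Km)))
          - 2 * (∫ x, phi k x * phi l x ∂(ν (f : Km)))
          + ∫ x, phi l x * phi l x ∂(ν (f : Km)) := by
      have heq : (fun x => (phi k x - phi l x) ^ 2)
          = fun x => (phi k x * phi k x - 2 * (phi k x * phi l x)) + phi l x * phi l x := by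
        funext x; ring
      rw [heq, integral_add i1 (phi_mul_integrable l l _),
        integral_sub (phi_mul_integrable k k _) i2, integral_const_mul _ _]
    have hns := @norm_sub_sq ℂ _ _ _ _ (v k) (v l)
    rw [hns, hrhs, hnk, hnl, ← hWW k l]
    simp [RCLike.re_to_complex]
  -- Cauchy sequence
  have hεto : Filter.Tendsto (fun n => ∫ x, (phi n x - x) ^ 2 ∂(ν (f : Km)))
      Filter.atTop (nhds 0) := by
    have h := tendsto_integral_of_dominated_convergence (μ := ν (f : Km))
      (F := fun n => fun x => (phi n x - x) ^ 2) (f := fun _ => (0:ℝ))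
      (bound := fun x => 4 * x ^ 2)
      (fun n => (((phi_measurable n).sub measurable_id).pow_const 2).aestronglyMeasurable)
      (hx2.const_mul 4)
      (fun n => Filter.Eventually.of_forall fun x => by
        rw [Real.norm_eq_abs, abs_of_nonneg (sq_nonneg _)]
        have habs : |phi n x - x| ≤ 2 * |x| := by
          calc |phi n x - x| ≤ |phi n x| + |x| := abs_sub _ _
            _ ≤ 2 * |x| := by linarith [phi_bound n x]
        calc (phi n x - x) ^ 2 = |phi n x - x| ^ 2 := (sq_abs _).symm
          _ ≤ (2 * |x|) ^ 2 := pow_le_pow_left₀ (abs_nonneg _) habs 2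
          _ = 4 * x ^ 2 := by rw [mul_pow, sq_abs]; norm_num)
      (Filter.Eventually.of_forall fun x => by
        have h1 := ((phi_tendsto x).sub (tendsto_const_nhds (x := x))).pow 2
        simpa using h1)
    simpa using h
  have hcauchy : CauchySeq v := by
    rw [Metric.cauchySeq_iff]
    intro δ hδ
    have hev : ∀ᶠ n in Filter.atTop,
        (∫ x, (phi n x - x) ^ 2 ∂(ν (f : Km))) < δ ^ 2 / 4 :=
      hεto.eventually_lt_const (by positivity)
    obtain ⟨N, hN⟩ := Filter.eventually_atTop.mp hev
    refine ⟨N, fun a ha b hb => ?_⟩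
    have j1 : Integrable (fun x => 2 * (phi a x - x) ^ 2) (ν (f : Km)) := by
      exact (hint2 a).const_mul 2
    have j2 : Integrable (fun x => 2 * (phi b x - x) ^ 2) (ν (f : Km)) := by
      exact (hint2 b).const_mul 2
    have hub : ‖v a - v b‖ ^ 2
        ≤ 2 * (∫ x, (phi a x - x) ^ 2 ∂(ν (f : Km)))
          + 2 * (∫ x, (phi b x - x) ^ 2 ∂(ν (f : Km))) := by
      rw [hvdiff a b]
      have hmono : ∫ x, (phi a x - phi b x) ^ 2 ∂(ν (f : Km))
          ≤ ∫ x, (2 * (phi a x - x) ^ 2 + 2 * (phi b x - x) ^ 2) ∂(ν (f : Km)) := by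
        apply integral_mono (hsqint a b) (j1.add j2)
        intro x
        simp only [Pi.add_apply]
        nlinarith [sq_nonneg (phi a x + phi b x - 2 * x)]
      calc ∫ x, (phi a x - phi b x) ^ 2 ∂(ν (f : Km)) ≤ _ := hmono
        _ = _ := by rw [integral_add j1 j2, integral_const_mul _ _, integral_const_mul _ _]
    have h1 := hN a ha
    have h2 := hN b hb
    rw [dist_eq_norm]
    have hlt : ‖v a - v b‖ ^ 2 < δ ^ 2 := by linarith
    exact lt_of_pow_lt_pow_left₀ 2 hδ.le hlt
  obtain ⟨T, hT⟩ := cauchySeq_tendsto_of_complete hcauchy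
  -- identify LHS with re ⟪Am f, T⟫
  have hS : (∫ x : ℝ, x ∂μp) - (∫ x : ℝ, x ∂μn) = (⟪(Am f : Km), T⟫_ℂ).re := by
    have h1 : ∀ n, (⟪(Am f : Km), v n⟫_ℂ).re = (∫ x, phi n x ∂μp) - ∫ x, phi n x ∂μn := by
      intro n
      simp only [hvdef]
      rw [Wop_inner_right]
      simp only [EigAux.phi]
      rw [sf_integral _ _ _ (Sseq_meas n) μp, sf_integral _ _ _ (Sseq_meas n) μn,
        ← Finset.sum_sub_distrib]
      refine Finset.sum_congr rfl fun i _ => ?_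
      rw [← mul_sub]
      congr 1
      rw [hμ _ (Sseq_meas n i), hEsa _ _ _ (Sseq_meas n i)]
    have h2 : Filter.Tendsto (fun n => (⟪(Am f : Km), v n⟫_ℂ).re) Filter.atTop
        (nhds ((⟪(Am f : Km), T⟫_ℂ).re)) :=
      (Complex.continuous_re.tendsto _).comp (Filter.Tendsto.inner tendsto_const_nhds hT)
    have h4 : Filter.Tendsto (fun n => (⟪(Am f : Km), v n⟫_ℂ).re) Filter.atTop
        (nhds ((∫ x : ℝ, x ∂μp) - ∫ x : ℝ, x ∂μn)) := by
      simp only [h1]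
      exact (phi_integral_tendsto μp hμp).sub (phi_integral_tendsto μn hμn)
    exact tendsto_nhds_unique h4 h2
  -- orthogonality
  have horthre : ∀ w : Am.domain, (w : Km) ≠ 0 → (f : Km) + (w : Km) ≠ 0 →
      (⟪T, (w : Km)⟫_ℂ).re = (⟪(Am f : Km), (w : Km)⟫_ℂ).re := by
    intro w hw hfw
    haveI := hfin _ hw
    haveI := hfin _ hfw
    have hx1p : Integrable (fun x : ℝ => x) (ν ((f : Km) + (w : Km))) := by
      have h := (hspec₁ (f + w)).1
      simpa using h
    have hx1f : Integrable (fun x : ℝ => x) (ν (f : Km)) := (hspec₁ f).1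
    have hx1w : Integrable (fun x : ℝ => x) (ν (w : Km)) := (hspec₁ w).1
    have hcs : ∀ n, (⟪v n, (w : Km)⟫_ℂ).re
        = ((∫ x, phi n x ∂(ν ((f : Km) + (w : Km)))) - (∫ x, phi n x ∂(ν (f : Km)))
            - ∫ x, phi n x ∂(ν (w : Km))) / 2 := by
      intro n
      simp only [hvdef]
      rw [Wop_inner_left]
      simp only [EigAux.phi]
      rw [sf_integral _ _ _ (Sseq_meas n) (ν ((f : Km) + (w : Km))),
        sf_integral _ _ _ (Sseq_meas n) (ν (f : Km)),
        sf_integral _ _ _ (Sseq_meas n) (ν (w : Km)),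
        ← Finset.sum_sub_distrib, ← Finset.sum_sub_distrib, Finset.sum_div]
      refine Finset.sum_congr rfl fun i _ => ?_
      rw [hpol (f : Km) (w : Km) _ (Sseq_meas n i)]
      ring
    have hTlim : Filter.Tendsto (fun n => (⟪v n, (w : Km)⟫_ℂ).re) Filter.atTop
        (nhds ((⟪T, (w : Km)⟫_ℂ).re)) :=
      (Complex.continuous_re.tendsto _).comp (Filter.Tendsto.inner hT tendsto_const_nhds)
    have h0 : Filter.Tendsto (fun n => (⟪v n, (w : Km)⟫_ℂ).re) Filter.atTop
        (nhds (((∫ x : ℝ, x ∂(ν ((f : Km) + (w : Km)))) - (∫ x : ℝ, x ∂(ν (f : Km)))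
          - ∫ x : ℝ, x ∂(ν (w : Km))) / 2)) := by
      simp only [hcs]
      exact (((phi_integral_tendsto _ hx1p).sub (phi_integral_tendsto _ hx1f)).sub
        (phi_integral_tendsto _ hx1w)).div_const 2
    have heq := tendsto_nhds_unique hTlim h0
    have e2 : ∫ x : ℝ, x ∂(ν (f : Km)) = (⟪(Am f : Km), (f : Km)⟫_ℂ).re :=
      ((hspec₁ f).2).symm
    have e3 : ∫ x : ℝ, x ∂(ν (w : Km)) = (⟪(Am w : Km), (w : Km)⟫_ℂ).re :=
      ((hspec₁ w).2).symm
    have e1 : ∫ x : ℝ, x ∂(ν ((f : Km) + (w : Km)))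
        = (⟪(Am f : Km), (f : Km)⟫_ℂ).re + (⟪(Am f : Km), (w : Km)⟫_ℂ).re
          + (⟪(Am w : Km), (f : Km)⟫_ℂ).re + (⟪(Am w : Km), (w : Km)⟫_ℂ).re := by
      have h := (hspec₁ (f + w)).2
      rw [LinearPMap.map_add] at h
      simp only [Submodule.coe_add] at h
      rw [inner_add_left, inner_add_right, inner_add_right] at h
      simp only [Complex.add_re] at h
      linarith
    have ecross : (⟪(Am w : Km), (f : Km)⟫_ℂ).re = (⟪(Am f : Km), (w : Km)⟫_ℂ).re := by
      rw [hsym w f]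
      exact hre_swap _ _
    rw [heq, e1, e2, e3]
    linarith
  have horthre' : ∀ w : Am.domain, (⟪T - (Am f : Km), (w : Km)⟫_ℂ).re = 0 := by
    have h2fv : (f : Km) + (f : Km) ≠ 0 := by
      intro h
      apply hf0
      have h2 : (2 : ℂ) • (f : Km) = 0 := by rw [two_smul]; exact h
      rcases smul_eq_zero.mp h2 with h' | h'
      · exact absurd h' two_ne_zero
      · exact h'
    have hTf : (⟪T, (f : Km)⟫_ℂ).re = (⟪(Am f : Km), (f : Km)⟫_ℂ).re :=
      horthre f hf0 h2fv
    intro w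
    by_cases hw : (w : Km) = 0
    · rw [hw, inner_zero_right]
      simp
    by_cases hfw : (f : Km) + (w : Km) = 0
    · have hwf : (w : Km) = -(f : Km) := eq_neg_of_add_eq_zero_right hfw
      rw [hwf, inner_neg_right, inner_sub_left]
      simp only [Complex.neg_re, Complex.sub_re]
      linarith
    · have h := horthre w hw hfw
      rw [inner_sub_left]
      simp only [Complex.sub_re]
      linarith
  have horth : ∀ w : Am.domain, ⟪T - (Am f : Km), (w : Km)⟫_ℂ = 0 := by
    intro w
    have h1 := horthre' w
    have h2 := horthre' (Complex.I • w)
    have hcoe : ((Complex.I • w : Am.domain) : Km) = Complex.I • (w : Km) := rfl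
    rw [hcoe, inner_smul_right, Complex.mul_re] at h2
    simp only [Complex.I_re, Complex.I_im] at h2
    have him : (⟪T - (Am f : Km), (w : Km)⟫_ℂ).im = 0 := by linarith
    exact Complex.ext (by simpa using h1) (by simpa using him)
  have hTg : T = (Am f : Km) := by
    rw [← sub_eq_zero]
    exact hdense.eq_zero_of_inner_left ℂ (fun v hv => horth ⟨v, hv⟩)
  have hfinal : (⟪(Am f : Km), T⟫_ℂ).re = ‖Am f‖ ^ 2 := by
    rw [hTg]
    have := @inner_self_eq_norm_sq ℂ _ _ _ _ (Am f : Km)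
    simpa using this
  rw [hS, hfinal]
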